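/- Let a, b, c, d be complex numbers satisfying condition (B), and let A = [[aJ, A₁₂],[A₂₁, bJ]] be a 4×4 complex matrix in 2×2 blocks (A₁₂, A₂₁ arbitrary) that is similar to the diagonal matrix diag(c, −c, d, −d). For ξ = c and ξ = −c let v_ξ = (v_ξ¹, v_ξ², v_ξ³, v_ξ⁴) be row vectors with v_ξ·A = ξ·v_ξ, and suppose v_ξᵏ ≠ 0 for all k = 1,2,3,4 and ξ = ±c, and det [[v_{−c}ˡ, v_{−c}^{l+1}],[v_cˡ, v_c^{l+1}]] ≠ 0 for l = 1, 3. Then, setting r_k = v_{−c}ᵏ / v_cᵏ (k = 1,2,3,4), the numbers r₁, r₂, r₃, r₄ satisfy condition (R) and condition (D), and the invertible diagonal matrix D = diag(v_c¹, v_c², v_c³, v_c⁴) satisfies D·A·D⁻¹ = A₁, where A₁ is the parametrized matrix built from a, b, c, d, r₁, r₂, r₃, r₄. -/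

import Mathlib

set_option maxHeartbeats 1000000
set_option synthInstance.maxHeartbeats 1000000
set_option linter.unusedVariables false

noncomputable section
open Matrix

/-- The 2×2 matrix J = diag(1, −1). -/
def Jmat : Matrix (Fin 2) (Fin 2) ℂ := !![1, 0; 0, -1]

/-- The 2×2 block A₁₂′ of the parametrized Okubo coefficient matrix. -/
def A12p (a b c d r1 r2 r3 r4 : ℂ) : Matrix (Fin 2) (Fin 2) ℂ :=
  !![((b-c)*r2-(b+c)*r3)/(r1-r2), ((b+c)*r2-(b-c)*r4)/(r2-r1);
     ((b-c)*r1-(b+c)*r3)/(r2-r1), ((b+c)*r1-(b-c)*r4)/(r1-r2)]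

/-- The 2×2 block A₂₁′ of the parametrized Okubo coefficient matrix. -/
def A21p (a b c d r1 r2 r3 r4 : ℂ) : Matrix (Fin 2) (Fin 2) ℂ :=
  !![((a+c)*r1-(a-c)*r4)/(r4-r3), ((a-c)*r2-(a+c)*r4)/(r3-r4);
     ((a+c)*r1-(a-c)*r3)/(r3-r4), ((a-c)*r2-(a+c)*r3)/(r4-r3)]

/-- The 4×4 parametrized coefficient matrix A₁ = [[aJ, A₁₂′],[A₂₁′, bJ]]. -/
def A1mat (a b c d r1 r2 r3 r4 : ℂ) : Matrix (Fin 4) (Fin 4) ℂ :=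
  !![a, 0, ((b-c)*r2-(b+c)*r3)/(r1-r2), ((b+c)*r2-(b-c)*r4)/(r2-r1);
     0, -a, ((b-c)*r1-(b+c)*r3)/(r2-r1), ((b+c)*r1-(b-c)*r4)/(r1-r2);
     ((a+c)*r1-(a-c)*r4)/(r4-r3), ((a-c)*r2-(a+c)*r4)/(r3-r4), b, 0;
     ((a+c)*r1-(a-c)*r3)/(r3-r4), ((a-c)*r2-(a+c)*r3)/(r4-r3), 0, -b]

/-- The 4×4 accessory-parameter-free matrix A₁* = [[aJ, B₁₂],[B₂₁, bJ]]. -/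
def A1star (a b c d : ℂ) : Matrix (Fin 4) (Fin 4) ℂ :=
  !![a, 0, ((a-b+c)^2-d^2)/(4*a), ((a+b+c)^2-d^2)/(4*a);
     0, -a, (d^2-(a+b-c)^2)/(4*a), (d^2-(a-b-c)^2)/(4*a);
     ((a-b-c)^2-d^2)/(4*b), ((a+b+c)^2-d^2)/(4*b), b, 0;
     (d^2-(a+b-c)^2)/(4*b), (d^2-(a-b+c)^2)/(4*b), 0, -b]

/-- Condition (B): none of the listed combinations is an integer. -/
def condB (a b c d : ℂ) : Prop :=
  ∀ n : ℤ, a ≠ n ∧ b ≠ n ∧ c ≠ n ∧ d ≠ n ∧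
    2*a ≠ n ∧ 2*b ≠ n ∧ 2*c ≠ n ∧ 2*d ≠ n ∧
    a+b ≠ n ∧ a-b ≠ n ∧ a+c ≠ n ∧ a-c ≠ n ∧ a+d ≠ n ∧ a-d ≠ n ∧
    b+c ≠ n ∧ b-c ≠ n ∧ b+d ≠ n ∧ b-d ≠ n ∧ c+d ≠ n ∧ c-d ≠ n

/-- Condition (R): r₁r₂r₃r₄ ≠ 0, r₁ ≠ r₂, r₃ ≠ r₄. -/
def condR (r1 r2 r3 r4 : ℂ) : Prop := r1*r2*r3*r4 ≠ 0 ∧ r1 ≠ r2 ∧ r3 ≠ r4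

/-- Condition (D). -/
def condD (a b c d r1 r2 r3 r4 : ℂ) : Prop :=
  ((a+b+c)^2*r1*r3 - (a-b+c)^2*r1*r4 - (a-b-c)^2*r2*r3 + (a+b-c)^2*r2*r4
    - 4*a*b*(r1*r2) - 4*a*b*(r3*r4)) / ((r1-r2)*(r3-r4)) = d^2

/-- ε = b(a+c)r₁ + b(a−c)r₂ − a(b+c)r₃ − a(b−c)r₄. -/
def epsv (a b c d r1 r2 r3 r4 : ℂ) : ℂ :=
  b*(a+c)*r1 + b*(a-c)*r2 - a*(b+c)*r3 - a*(b-c)*r4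

/-- δ = r₁r₂ − r₃r₄. -/
def deltav (a b c d r1 r2 r3 r4 : ℂ) : ℂ := r1*r2 - r3*r4

/-- ε′ = 2ε/((r₁−r₂)(r₃−r₄)). -/
def epsp (a b c d r1 r2 r3 r4 : ℂ) : ℂ :=
  2*(epsv a b c d r1 r2 r3 r4)/((r1-r2)*(r3-r4))

/-- δ′ = 2δ/((r₁−r₂)(r₃−r₄)). -/
def deltp (a b c d r1 r2 r3 r4 : ℂ) : ℂ :=
  2*(deltav a b c d r1 r2 r3 r4)/((r1-r2)*(r3-r4))

/-- R₁₁. -/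
def R11 (a b c d r1 r2 r3 r4 : ℂ) : Matrix (Fin 2) (Fin 2) ℂ :=
  ((a^2-b^2-c^2-d^2)/2) • (1 : Matrix (Fin 2) (Fin 2) ℂ)
    + (epsp a b c d r1 r2 r3 r4) • !![0, r2; r1, 0]
    - (b * deltp a b c d r1 r2 r3 r4) • !![c, a+c; a-c, -c]

/-- S₁₁. -/
def S11 (a b c d r1 r2 r3 r4 : ℂ) : Matrix (Fin 2) (Fin 2) ℂ :=
  b • (A12p a b c d r1 r2 r3 r4 * Jmat * A21p a b c d r1 r2 r3 r4)
    - (a*b^2) • Jmat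
    - (2*a*b*c * deltp a b c d r1 r2 r3 r4) • (1 : Matrix (Fin 2) (Fin 2) ℂ)

/-- R̃₁₁. -/
def Rt11 (a b c d r1 r2 r3 r4 : ℂ) : Matrix (Fin 2) (Fin 2) ℂ :=
  ((a^2-b^2-c^2-d^2)/2) • (1 : Matrix (Fin 2) (Fin 2) ℂ)
    - (epsp a b c d r1 r2 r3 r4) • !![0, r2; r1, 0]
    + (b * deltp a b c d r1 r2 r3 r4) • !![c, a+c; a-c, -c]

/-- S̃₁₁. -/
def St11 (a b c d r1 r2 r3 r4 : ℂ) : Matrix (Fin 2) (Fin 2) ℂ :=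
  (a*b^2) • Jmat
    - b • (A12p a b c d r1 r2 r3 r4 * Jmat * A21p a b c d r1 r2 r3 r4)

/-- A 4×4 matrix with prescribed diagonal blocks aJ, bJ and arbitrary
off-diagonal 2×2 blocks A₁₂, A₂₁. -/
def blockMat (a b : ℂ) (A12 A21 : Matrix (Fin 2) (Fin 2) ℂ) :
    Matrix (Fin 4) (Fin 4) ℂ :=
  !![a, 0, A12 0 0, A12 0 1;
     0, -a, A12 1 0, A12 1 1;
     A21 0 0, A21 0 1, b, 0;
     A21 1 0, A21 1 1, 0, -b]

/-- Proposition `prop:expr_a_kai`. -/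
theorem stmt_0 (a b c d : ℂ) (hB : condB a b c d)
    (A12 A21 : Matrix (Fin 2) (Fin 2) ℂ)
    (A : Matrix (Fin 4) (Fin 4) ℂ)
    (hA : A = blockMat a b A12 A21)
    (hsim : ∃ S : Matrix (Fin 4) (Fin 4) ℂ, IsUnit S ∧
      S * A * S⁻¹ = Matrix.diagonal ![c, -c, d, -d])
    (vm vc : Fin 4 → ℂ)
    (hvm : Matrix.vecMul vm A = (-c) • vm)
    (hvc : Matrix.vecMul vc A = c • vc)
    (hne : ∀ k : Fin 4, vm k ≠ 0 ∧ vc k ≠ 0)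
    (hdet1 : vm 0 * vc 1 - vm 1 * vc 0 ≠ 0)
    (hdet3 : vm 2 * vc 3 - vm 3 * vc 2 ≠ 0) :
    condR (vm 0 / vc 0) (vm 1 / vc 1) (vm 2 / vc 2) (vm 3 / vc 3) ∧
    condD a b c d (vm 0 / vc 0) (vm 1 / vc 1) (vm 2 / vc 2) (vm 3 / vc 3) ∧
    Matrix.diagonal vc * A * (Matrix.diagonal vc)⁻¹ =
      A1mat a b c d (vm 0 / vc 0) (vm 1 / vc 1) (vm 2 / vc 2) (vm 3 / vc 3) := by
  subst hA
  have hw0 := (hne 0).1; have hw1 := (hne 1).1; have hw2 := (hne 2).1; have hw3 := (hne 3).1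
  have hv0 := (hne 0).2; have hv1 := (hne 1).2; have hv2 := (hne 2).2; have hv3 := (hne 3).2
  have hd1 : vc 0 * vm 1 - vm 0 * vc 1 ≠ 0 := fun h => hdet1 (by linear_combination -h)
  have hd3 : vc 2 * vm 3 - vm 2 * vc 3 ≠ 0 := fun h => hdet3 (by linear_combination -h)
  have E0 := congrFun hvc 0
  have E1 := congrFun hvc 1
  have E2 := congrFun hvc 2
  have E3 := congrFun hvc 3
  have F0 := congrFun hvm 0
  have F1 := congrFun hvm 1
  have F2 := congrFun hvm 2
  have F3 := congrFun hvm 3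
  simp [blockMat, Matrix.vecMul, dotProduct, Fin.sum_univ_four] at E0 E1 E2 E3 F0 F1 F2 F3
  -- multiplied closed forms for the off-diagonal entries
  have mp00 : A12 0 0 * (vc 0 * vm 1 - vm 0 * vc 1)
      = (c-b)*vc 2*vm 1 + (c+b)*vm 2*vc 1 := by linear_combination (vm 1)*E2 - (vc 1)*F2
  have mp10 : A12 1 0 * (vc 0 * vm 1 - vm 0 * vc 1)
      = (b-c)*vc 2*vm 0 - (c+b)*vm 2*vc 0 := by linear_combination (-(vm 0))*E2 + (vc 0)*F2
  have mp01 : A12 0 1 * (vc 0 * vm 1 - vm 0 * vc 1)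
      = (c+b)*vc 3*vm 1 - (b-c)*vm 3*vc 1 := by linear_combination (vm 1)*E3 - (vc 1)*F3
  have mp11 : A12 1 1 * (vc 0 * vm 1 - vm 0 * vc 1)
      = (b-c)*vm 3*vc 0 - (c+b)*vc 3*vm 0 := by linear_combination (-(vm 0))*E3 + (vc 0)*F3
  have mq00 : A21 0 0 * (vc 2 * vm 3 - vm 2 * vc 3)
      = (c-a)*vc 0*vm 3 + (c+a)*vm 0*vc 3 := by linear_combination (vm 3)*E0 - (vc 3)*F0
  have mq10 : A21 1 0 * (vc 2 * vm 3 - vm 2 * vc 3)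
      = (a-c)*vc 0*vm 2 - (c+a)*vm 0*vc 2 := by linear_combination (-(vm 2))*E0 + (vc 2)*F0
  have mq01 : A21 0 1 * (vc 2 * vm 3 - vm 2 * vc 3)
      = (c+a)*vc 1*vm 3 - (a-c)*vm 1*vc 3 := by linear_combination (vm 3)*E1 - (vc 3)*F1
  have mq11 : A21 1 1 * (vc 2 * vm 3 - vm 2 * vc 3)
      = (a-c)*vm 1*vc 2 - (c+a)*vc 1*vm 2 := by linear_combination (-(vm 2))*E1 + (vc 2)*F1
  -- condition (R)
  have hr12 : vm 0 / vc 0 ≠ vm 1 / vc 1 := by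
    rw [Ne, div_eq_div_iff hv0 hv1]
    intro h; exact hdet1 (by linear_combination h)
  have hr34 : vm 2 / vc 2 ≠ vm 3 / vc 3 := by
    rw [Ne, div_eq_div_iff hv2 hv3]
    intro h; exact hdet3 (by linear_combination h)
  have hs12 : vm 0 / vc 0 - vm 1 / vc 1 ≠ 0 := sub_ne_zero.mpr hr12
  have hs34 : vm 2 / vc 2 - vm 3 / vc 3 ≠ 0 := sub_ne_zero.mpr hr34
  have hs21 : vm 1 / vc 1 - vm 0 / vc 0 ≠ 0 := sub_ne_zero.mpr (Ne.symm hr12)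
  have hs43 : vm 3 / vc 3 - vm 2 / vc 2 ≠ 0 := sub_ne_zero.mpr (Ne.symm hr34)
  have hR : condR (vm 0 / vc 0) (vm 1 / vc 1) (vm 2 / vc 2) (vm 3 / vc 3) :=
    ⟨mul_ne_zero (mul_ne_zero (mul_ne_zero (div_ne_zero hw0 hv0) (div_ne_zero hw1 hv1))
      (div_ne_zero hw2 hv2)) (div_ne_zero hw3 hv3), hr12, hr34⟩
  -- trace identity from similarity
  obtain ⟨S, hSu, hS⟩ := hsim
  haveI := hSu.invertible
  have hAA : blockMat a b A12 A21 * blockMat a b A12 A21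
      = S⁻¹ * (Matrix.diagonal ![c,-c,d,-d] * Matrix.diagonal ![c,-c,d,-d]) * S := by
    rw [← hS]; simp [Matrix.mul_assoc]
  have htr : (blockMat a b A12 A21 * blockMat a b A12 A21).trace = 2*c^2+2*d^2 := by
    rw [hAA, Matrix.trace_mul_cycle, Matrix.mul_inv_of_invertible, Matrix.one_mul]
    simp [Matrix.diagonal_mul_diagonal, Matrix.trace_diagonal, Fin.sum_univ_four]
    ring
  simp [blockMat, Matrix.trace, Matrix.diag, Matrix.mul_apply, Fin.sum_univ_four] at htr
  have hd2 : d^2 = a^2 + b^2 - c^2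
      + (A12 0 0 * A21 0 0 + A12 0 1 * A21 1 0 + A12 1 0 * A21 0 1 + A12 1 1 * A21 1 1) := by
    linear_combination -htr/2
  have hd2p : d^2 * ((vc 0 * vm 1 - vm 0 * vc 1) * (vc 2 * vm 3 - vm 2 * vc 3)) =
      (a^2+b^2-c^2)*((vc 0 * vm 1 - vm 0 * vc 1) * (vc 2 * vm 3 - vm 2 * vc 3))
      + ((c-b)*vc 2*vm 1 + (c+b)*vm 2*vc 1) * ((c-a)*vc 0*vm 3 + (c+a)*vm 0*vc 3)
      + ((c+b)*vc 3*vm 1 - (b-c)*vm 3*vc 1) * ((a-c)*vc 0*vm 2 - (c+a)*vm 0*vc 2)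
      + ((b-c)*vc 2*vm 0 - (c+b)*vm 2*vc 0) * ((c+a)*vc 1*vm 3 - (a-c)*vm 1*vc 3)
      + ((b-c)*vm 3*vc 0 - (c+b)*vc 3*vm 0) * ((a-c)*vm 1*vc 2 - (c+a)*vc 1*vm 2) := by
    linear_combination ((vc 0 * vm 1 - vm 0 * vc 1) * (vc 2 * vm 3 - vm 2 * vc 3)) * hd2
      + (A21 0 0 * (vc 2 * vm 3 - vm 2 * vc 3)) * mp00
      + ((c-b)*vc 2*vm 1 + (c+b)*vm 2*vc 1) * mq00
      + (A21 1 0 * (vc 2 * vm 3 - vm 2 * vc 3)) * mp01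
      + ((c+b)*vc 3*vm 1 - (b-c)*vm 3*vc 1) * mq10
      + (A21 0 1 * (vc 2 * vm 3 - vm 2 * vc 3)) * mp10
      + ((b-c)*vc 2*vm 0 - (c+b)*vm 2*vc 0) * mq01
      + (A21 1 1 * (vc 2 * vm 3 - vm 2 * vc 3)) * mp11
      + ((b-c)*vm 3*vc 0 - (c+b)*vc 3*vm 0) * mq11
  refine ⟨hR, ?_, ?_⟩
  · show _ = d^2
    rw [div_eq_iff (mul_ne_zero hs12 hs34)]
    have h0 : vm 0 = vm 0 / vc 0 * vc 0 := (div_mul_cancel₀ _ hv0).symm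
    have h1 : vm 1 = vm 1 / vc 1 * vc 1 := (div_mul_cancel₀ _ hv1).symm
    have h2 : vm 2 = vm 2 / vc 2 * vc 2 := (div_mul_cancel₀ _ hv2).symm
    have h3 : vm 3 = vm 3 / vc 3 * vc 3 := (div_mul_cancel₀ _ hv3).symm
    rw [h0, h1, h2, h3] at hd2p
    set r0 := vm 0 / vc 0
    set r1 := vm 1 / vc 1
    set r2 := vm 2 / vc 2
    set r3 := vm 3 / vc 3
    apply mul_left_cancel₀ (mul_ne_zero (mul_ne_zero (mul_ne_zero hv0 hv1) hv2) hv3)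
    linear_combination (-1 : ℂ) * hd2p
  · have hDdet : IsUnit (Matrix.diagonal vc).det := by
      have hdd : (Matrix.diagonal vc).det = vc 0 * vc 1 * vc 2 * vc 3 := by
        rw [Matrix.det_diagonal, Fin.prod_univ_four]
      rw [hdd, isUnit_iff_ne_zero]
      exact mul_ne_zero (mul_ne_zero (mul_ne_zero hv0 hv1) hv2) hv3
    haveI := (Matrix.diagonal vc).invertibleOfIsUnitDet hDdet
    rw [Matrix.mul_inv_eq_iff_eq_mul_of_invertible]
    ext i j
    fin_cases i <;> fin_cases j <;>
      simp only [Matrix.diagonal_mul, Matrix.mul_diagonal, blockMat, A1mat, Fin.isValue,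
        Matrix.cons_val', Matrix.cons_val_zero, Matrix.cons_val_one, Matrix.head_cons,
        Matrix.empty_val', Matrix.cons_val_fin_one, Matrix.head_fin_const, Matrix.cons_val_two,
        Matrix.cons_val_three, Matrix.tail_cons, Matrix.of_apply, Fin.zero_eta, Fin.mk_one,
        Fin.reduceFinMk] <;>
      first
        | ring1
        | (rw [div_mul_eq_mul_div, eq_div_iff hs12]
           field_simp
           first
             | linear_combination (-(vc 0 * vc 1 * vc 2)) * mp00
             | linear_combination (-(vc 0 * vc 1 * vc 2)) * mp10
             | linear_combination (-(vc 0 * vc 1 * vc 3)) * mp01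
             | linear_combination (-(vc 0 * vc 1 * vc 3)) * mp11
             | linear_combination (vc 0 * vc 1 * vc 2) * mp00
             | linear_combination (vc 0 * vc 1 * vc 2) * mp10
             | linear_combination (vc 0 * vc 1 * vc 3) * mp01
             | linear_combination (vc 0 * vc 1 * vc 3) * mp11
               | linear_combination (-1 : ℂ) * mp00
               | linear_combination (-1 : ℂ) * mp10
               | linear_combination (-1 : ℂ) * mp01
               | linear_combination (-1 : ℂ) * mp11
               | linear_combination (1 : ℂ) * mp00
               | linear_combination (1 : ℂ) * mp10
               | linear_combination (1 : ℂ) * mp01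
               | linear_combination (1 : ℂ) * mp11)
        | (rw [div_mul_eq_mul_div, eq_div_iff hs21]
           field_simp
           first
             | linear_combination (-(vc 0 * vc 1 * vc 2)) * mp00
             | linear_combination (-(vc 0 * vc 1 * vc 2)) * mp10
             | linear_combination (-(vc 0 * vc 1 * vc 3)) * mp01
             | linear_combination (-(vc 0 * vc 1 * vc 3)) * mp11
             | linear_combination (vc 0 * vc 1 * vc 2) * mp00
             | linear_combination (vc 0 * vc 1 * vc 2) * mp10
             | linear_combination (vc 0 * vc 1 * vc 3) * mp01
             | linear_combination (vc 0 * vc 1 * vc 3) * mp11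
               | linear_combination (-1 : ℂ) * mp00
               | linear_combination (-1 : ℂ) * mp10
               | linear_combination (-1 : ℂ) * mp01
               | linear_combination (-1 : ℂ) * mp11
               | linear_combination (1 : ℂ) * mp00
               | linear_combination (1 : ℂ) * mp10
               | linear_combination (1 : ℂ) * mp01
               | linear_combination (1 : ℂ) * mp11)
        | (rw [div_mul_eq_mul_div, eq_div_iff hs34]
           field_simp
           first
             | linear_combination (-(vc 0 * vc 2 * vc 3)) * mq00
             | linear_combination (-(vc 0 * vc 2 * vc 3)) * mq10
             | linear_combination (-(vc 1 * vc 2 * vc 3)) * mq01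
             | linear_combination (-(vc 1 * vc 2 * vc 3)) * mq11
             | linear_combination (vc 0 * vc 2 * vc 3) * mq00
             | linear_combination (vc 0 * vc 2 * vc 3) * mq10
             | linear_combination (vc 1 * vc 2 * vc 3) * mq01
             | linear_combination (vc 1 * vc 2 * vc 3) * mq11
               | linear_combination (-1 : ℂ) * mq00
               | linear_combination (-1 : ℂ) * mq10
               | linear_combination (-1 : ℂ) * mq01
               | linear_combination (-1 : ℂ) * mq11
               | linear_combination (1 : ℂ) * mq00
               | linear_combination (1 : ℂ) * mq10
               | linear_combination (1 : ℂ) * mq01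
               | linear_combination (1 : ℂ) * mq11)
        | (rw [div_mul_eq_mul_div, eq_div_iff hs43]
           field_simp
           first
             | linear_combination (-(vc 0 * vc 2 * vc 3)) * mq00
             | linear_combination (-(vc 0 * vc 2 * vc 3)) * mq10
             | linear_combination (-(vc 1 * vc 2 * vc 3)) * mq01
             | linear_combination (-(vc 1 * vc 2 * vc 3)) * mq11
             | linear_combination (vc 0 * vc 2 * vc 3) * mq00
             | linear_combination (vc 0 * vc 2 * vc 3) * mq10
             | linear_combination (vc 1 * vc 2 * vc 3) * mq01
             | linear_combination (vc 1 * vc 2 * vc 3) * mq11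
               | linear_combination (-1 : ℂ) * mq00
               | linear_combination (-1 : ℂ) * mq10
               | linear_combination (-1 : ℂ) * mq01
               | linear_combination (-1 : ℂ) * mq11
               | linear_combination (1 : ℂ) * mq00
               | linear_combination (1 : ℂ) * mq10
               | linear_combination (1 : ℂ) * mq01
               | linear_combination (1 : ℂ) * mq11)
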